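/- Let Γ be a finite connected simplicial graph with no SIL whose vertices are labeled by nontrivial cyclic groups. Then the image of the homomorphism f̃: G_{Γ₀} → G_{Γ̃} determined by v ↦ p_v is a normal subgroup of G_{Γ̃}. -/

import Mathlib

open Monoid

namespace ArXiv

universe u uG

variable {V : Type u}

/-- The star of a vertex: the vertex together with its neighbors. -/
def star (Γ : SimpleGraph V) (v : V) : Set V := insert v (Γ.neighborSet v)

/-- `C ⊆ V` is the vertex set of a connected component of the full subgraph of `Γ`
induced on `S`. -/
def IsCompOf (Γ : SimpleGraph V) (S : Set V) (C : Set V) : Prop :=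
  ∃ c : (Γ.induce S).ConnectedComponent, C = Subtype.val '' c.supp

/-- `Γ` has a separating intersection of links: there are distinct non-adjacent vertices
`v, w` such that some connected component of `Γ ∖ (lk(v) ∩ lk(w))` contains neither `v`
nor `w`. -/
def HasSIL (Γ : SimpleGraph V) : Prop :=
  ∃ v w : V, v ≠ w ∧ ¬ Γ.Adj v w ∧
    ∃ C : Set V, IsCompOf Γ ((Γ.neighborSet v ∩ Γ.neighborSet w)ᶜ) C ∧ v ∉ C ∧ w ∉ C

variable (Γ : SimpleGraph V) (G : V → Type uG) [∀ v, Group (G v)]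

/-- The commutator relators defining the graph product. -/
def rels : Set (Monoid.CoprodI G) :=
  {x | ∃ (v w : V) (_ : Γ.Adj v w) (g : G v) (h : G w),
    x = CoprodI.of g * CoprodI.of h * (CoprodI.of g)⁻¹ * (CoprodI.of h)⁻¹}

/-- The graph product of the vertex groups `G v` over the graph `Γ`: the quotient of the
free product by the normal closure of the commutators of adjacent vertex groups. -/
def GraphProduct : Type (max u uG) :=
  Monoid.CoprodI G ⧸ Subgroup.normalClosure (rels Γ G)

instance : Group (GraphProduct Γ G) :=
  inferInstanceAs (Group (Monoid.CoprodI G ⧸ Subgroup.normalClosure (rels Γ G)))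

/-- The canonical map from a vertex group into the graph product. -/
def of {v : V} : G v →* GraphProduct Γ G :=
  (QuotientGroup.mk' (Subgroup.normalClosure (rels Γ G))).comp CoprodI.of

theorem of_commute {v w : V} (h : Γ.Adj v w) (g : G v) (k : G w) :
    Commute (of Γ G g) (of Γ G k) := by
  rw [← commutatorElement_eq_one_iff_commute]
  have hmem : (CoprodI.of g * CoprodI.of k * (CoprodI.of g)⁻¹ * (CoprodI.of k)⁻¹ :
      Monoid.CoprodI G) ∈ Subgroup.normalClosure (rels Γ G) :=
    Subgroup.subset_normalClosure ⟨v, w, h, g, k, rfl⟩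
  have h1 : (QuotientGroup.mk' (Subgroup.normalClosure (rels Γ G)))
      (CoprodI.of g * CoprodI.of k * (CoprodI.of g)⁻¹ * (CoprodI.of k)⁻¹) = 1 :=
    (QuotientGroup.eq_one_iff _).mpr hmem
  simp only [map_mul, map_inv] at h1
  rw [commutatorElement_def]
  exact h1

/-- `π` is the partial conjugation `π_{v,C}`, for vertex groups with chosen generators
`gen`: it conjugates the generators in `C` by (the generator of) `v` and fixes all other
generators. -/
def IsPartialConj (gen : ∀ v, G v) (π : MulAut (GraphProduct Γ G)) (v : V) (C : Set V) :
    Prop :=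
  (∀ u ∈ C, ∀ g : G u, π (of Γ G g) = of Γ G (gen v) * of Γ G g * (of Γ G (gen v))⁻¹) ∧
  (∀ u ∉ C, ∀ g : G u, π (of Γ G g) = of Γ G g)

/-- `π` is the partial conjugation `π_{a,C}` by the element `a` of the vertex group `G v`:
it conjugates the vertex groups in `C` by `a` and fixes all other vertex groups. -/
def IsPartialConjBy {v : V} (a : G v) (π : MulAut (GraphProduct Γ G)) (C : Set V) : Prop :=
  (∀ u ∈ C, ∀ g : G u, π (of Γ G g) = of Γ G a * of Γ G g * (of Γ G a)⁻¹) ∧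
  (∀ u ∉ C, ∀ g : G u, π (of Γ G g) = of Γ G g)

/-- The vertex set of the graph `Γ̃`: pairs `p_{v,C}` where `C` is a connected component
of `Γ ∖ st(v)`. -/
def TV : Type u := {p : V × Set V // IsCompOf Γ ((star Γ p.1)ᶜ) p.2}

/-- The graph `Γ̃`: vertices `p_{v,C}` and `p_{w,D}` are joined by an edge unless
`v, w` are distinct non-adjacent vertices with `v ∈ D` and `w ∈ C`. -/
def tilde : SimpleGraph (TV Γ) where
  Adj p q := p ≠ q ∧
    ¬(p.1.1 ≠ q.1.1 ∧ ¬ Γ.Adj p.1.1 q.1.1 ∧ p.1.1 ∈ q.1.2 ∧ q.1.1 ∈ p.1.2)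
  symm := by
    constructor
    rintro p q ⟨h1, h2⟩
    exact ⟨h1.symm, fun ⟨a, b, c, d⟩ => h2 ⟨a.symm, fun e => b e.symm, d, c⟩⟩
  loopless := ⟨fun p h => h.1 rfl⟩

/-- The graph product `G_{Γ̃}`, where the vertex `p_{v,C}` is labeled by (a copy of) the
group `G v`. -/
abbrev TildeProduct : Type (max u uG) :=
  GraphProduct (tilde Γ) (fun p : TV Γ => G p.1.1)

/-- The element `p_v = ∏_C p_{v,C} ∈ G_{Γ̃}`, the product over all connected components
`C` of `Γ ∖ st(v)` (the factors pairwise commute). -/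
noncomputable def pvert [Finite V] (gen : ∀ v, G v) (v : V) : TildeProduct Γ G :=
  haveI : Fintype {C : Set V // IsCompOf Γ ((star Γ v)ᶜ) C} := Fintype.ofFinite _
  Finset.noncommProd (Finset.univ : Finset {C : Set V // IsCompOf Γ ((star Γ v)ᶜ) C})
    (fun c => of (tilde Γ) (fun p : TV Γ => G p.1.1) (v := ⟨(v, c.1), c.2⟩) (gen v))
    (by
      intro a _ b _ hab
      have hadj : (tilde Γ).Adj ⟨(v, a.1), a.2⟩ ⟨(v, b.1), b.2⟩ := by
        show _ ≠ _ ∧ _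
        refine ⟨fun h => hab (Subtype.ext (congrArg (fun x : TV Γ => x.1.2) h)), ?_⟩
        rintro ⟨hne, -⟩
        exact hne rfl
      exact of_commute (tilde Γ) (fun p : TV Γ => G p.1.1) hadj (gen v) (gen v))

/-- The set `Δ` of vertices adjacent to every other vertex of `Γ`. -/
def Delta (Γ : SimpleGraph V) : Set V := {v | ∀ u, u ≠ v → Γ.Adj v u}

/-- The subgroup of the graph product generated by the vertex groups `G v`, `v ∈ T`. -/
def vertexSubgroup (T : Set V) : Subgroup (GraphProduct Γ G) :=
  Subgroup.closure {x | ∃ v ∈ T, ∃ g : G v, x = of Γ G g}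

/-- `w` is a reduced word for the element `g` of the graph product: a minimal length
expression of `g` as a product of nontrivial elements of vertex groups. -/
def IsReducedWord (g : GraphProduct Γ G) (w : List (Σ v : V, G v)) : Prop :=
  (w.map fun l => of Γ G l.2).prod = g ∧ (∀ l ∈ w, l.2 ≠ 1) ∧
    ∀ w' : List (Σ v : V, G v), (w'.map fun l => of Γ G l.2).prod = g →
      w.length ≤ w'.length

theorem closure_of_eq_top :
    Subgroup.closure {x : GraphProduct Γ G | ∃ (v : V) (g : G v), x = of Γ G g} = ⊤ := by
  rw [eq_top_iff]
  rintro x -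
  obtain ⟨y, rfl⟩ := QuotientGroup.mk'_surjective (Subgroup.normalClosure (rels Γ G)) x
  induction y using Monoid.CoprodI.induction_on with
  | one => rw [map_one]; exact Subgroup.one_mem _
  | of i m => exact Subgroup.subset_closure ⟨i, m, rfl⟩
  | mul a b ha hb => rw [map_mul]; exact Subgroup.mul_mem _ ha hb

theorem isCompOf_subset {S C : Set V} (h : IsCompOf Γ S C) : C ⊆ S := by
  obtain ⟨c, rfl⟩ := h
  rintro _ ⟨x, -, rfl⟩
  exact x.2

theorem isCompOf_eq_of_mem {S C D : Set V} (hC : IsCompOf Γ S C) (hD : IsCompOf Γ S D)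
    {u : V} (h1 : u ∈ C) (h2 : u ∈ D) : C = D := by
  obtain ⟨c, rfl⟩ := hC
  obtain ⟨d, rfl⟩ := hD
  obtain ⟨x, hx, rfl⟩ := h1
  obtain ⟨y, hy, hyx⟩ := h2
  obtain rfl : y = x := Subtype.ext hyx
  rw [SimpleGraph.ConnectedComponent.mem_supp_iff] at hx hy
  rw [← hx, ← hy]

theorem commute_gen_of (gen : ∀ v, G v) (p q : TV Γ)
    (hcond : ¬(p.1.1 ≠ q.1.1 ∧ ¬ Γ.Adj p.1.1 q.1.1 ∧ p.1.1 ∈ q.1.2 ∧ q.1.1 ∈ p.1.2)) :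
    Commute (of (tilde Γ) (fun r : TV Γ => G r.1.1) (v := p) (gen p.1.1))
      (of (tilde Γ) (fun r : TV Γ => G r.1.1) (v := q) (gen q.1.1)) := by
  by_cases hpq : p = q
  · subst hpq; exact Commute.refl _
  · exact of_commute (tilde Γ) (fun r : TV Γ => G r.1.1)
      (show (tilde Γ).Adj p q by show _ ≠ _ ∧ _; exact ⟨hpq, hcond⟩) _ _

theorem commute_pvert [Finite V] (gen : ∀ v, G v) (v : V) (y : TildeProduct Γ G)
    (h : ∀ c : {C : Set V // IsCompOf Γ ((star Γ v)ᶜ) C},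
      Commute y (of (tilde Γ) (fun r : TV Γ => G r.1.1) (v := ⟨(v, c.1), c.2⟩) (gen v))) :
    Commute y (pvert Γ G gen v) := by
  haveI : Fintype {C : Set V // IsCompOf Γ ((star Γ v)ᶜ) C} := Fintype.ofFinite _
  exact Finset.noncommProd_commute _ _ _ _ fun c _ => h c

theorem pvert_conj_eq [Finite V] (gen : ∀ v, G v) (w : V)
    (c₀ : {C : Set V // IsCompOf Γ ((star Γ w)ᶜ) C}) (y : TildeProduct Γ G)
    (h : ∀ d : {C : Set V // IsCompOf Γ ((star Γ w)ᶜ) C}, d ≠ c₀ →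
      Commute (of (tilde Γ) (fun r : TV Γ => G r.1.1) (v := ⟨(w, d.1), d.2⟩) (gen w)) y) :
    of (tilde Γ) (fun r : TV Γ => G r.1.1) (v := ⟨(w, c₀.1), c₀.2⟩) (gen w) * y *
        (of (tilde Γ) (fun r : TV Γ => G r.1.1) (v := ⟨(w, c₀.1), c₀.2⟩) (gen w))⁻¹ =
      pvert Γ G gen w * y * (pvert Γ G gen w)⁻¹ ∧
    (of (tilde Γ) (fun r : TV Γ => G r.1.1) (v := ⟨(w, c₀.1), c₀.2⟩) (gen w))⁻¹ * y *
        of (tilde Γ) (fun r : TV Γ => G r.1.1) (v := ⟨(w, c₀.1), c₀.2⟩) (gen w) =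
      (pvert Γ G gen w)⁻¹ * y * pvert Γ G gen w := by
  classical
  letI : Fintype {C : Set V // IsCompOf Γ ((star Γ w)ᶜ) C} := Fintype.ofFinite _
  have comm : ((Finset.univ : Finset {C : Set V // IsCompOf Γ ((star Γ w)ᶜ) C}) :
      Set {C : Set V // IsCompOf Γ ((star Γ w)ᶜ) C}).Pairwise fun a b =>
        Commute (of (tilde Γ) (fun r : TV Γ => G r.1.1) (v := ⟨(w, a.1), a.2⟩) (gen w))
          (of (tilde Γ) (fun r : TV Γ => G r.1.1) (v := ⟨(w, b.1), b.2⟩) (gen w)) := by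
    intro a _ b _ hab
    exact commute_gen_of Γ G gen _ _ fun hcon => hcon.1 rfl
  obtain ⟨z, hzy, hxz, hzx⟩ :
      ∃ z : TildeProduct Γ G, Commute z y ∧
        of (tilde Γ) (fun r : TV Γ => G r.1.1) (v := ⟨(w, c₀.1), c₀.2⟩) (gen w) * z =
          pvert Γ G gen w ∧
        z * of (tilde Γ) (fun r : TV Γ => G r.1.1) (v := ⟨(w, c₀.1), c₀.2⟩) (gen w) =
          pvert Γ G gen w := by
    refine ⟨(Finset.univ.erase c₀).noncommProd
        (fun c => of (tilde Γ) (fun r : TV Γ => G r.1.1) (v := ⟨(w, c.1), c.2⟩) (gen w))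
        (comm.mono (Finset.coe_subset.mpr (Finset.erase_subset _ _))), ?_, ?_, ?_⟩
    · exact (Finset.noncommProd_commute _ _ _ _ fun d hd =>
        (h d (Finset.mem_erase.mp hd).1).symm).symm
    · exact Finset.mul_noncommProd_erase Finset.univ (Finset.mem_univ c₀)
        (fun c => of (tilde Γ) (fun r : TV Γ => G r.1.1) (v := ⟨(w, c.1), c.2⟩) (gen w)) comm
    · exact Finset.noncommProd_erase_mul Finset.univ (Finset.mem_univ c₀)
        (fun c => of (tilde Γ) (fun r : TV Γ => G r.1.1) (v := ⟨(w, c.1), c.2⟩) (gen w)) comm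
  have hy1 : z * y * z⁻¹ = y := by rw [hzy.eq, mul_inv_cancel_right]
  have hy2 : z⁻¹ * y * z = y := by rw [hzy.inv_left.eq, inv_mul_cancel_right]
  constructor
  · rw [← hxz, mul_inv_rev]
    conv_lhs => rw [← hy1]
    group
  · rw [← hzx, mul_inv_rev]
    conv_lhs => rw [← hy2]
    group

theorem mem_normalizer_of_conj {M : Type*} [Group M] {S : Set M} {x : M}
    (h : ∀ s ∈ S, x * s * x⁻¹ ∈ Subgroup.closure S ∧ x⁻¹ * s * x ∈ Subgroup.closure S) :
    x ∈ Subgroup.normalizer (Subgroup.closure S : Set M) := by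
  have key : ∀ y : M, (∀ s ∈ S, y * s * y⁻¹ ∈ Subgroup.closure S) →
      ∀ g ∈ Subgroup.closure S, y * g * y⁻¹ ∈ Subgroup.closure S := by
    intro y hy g hg
    have hle : Subgroup.closure S ≤
        (Subgroup.closure S).comap (MulAut.conj y : M ≃* M).toMonoidHom := by
      rw [Subgroup.closure_le]
      intro s hs
      simpa [Subgroup.mem_comap] using hy s hs
    simpa [Subgroup.mem_comap] using hle hg
  rw [Subgroup.mem_normalizer_iff]
  intro g
  constructor
  · exact fun hg => key x (fun s hs => (h s hs).1) g hg
  · intro hg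
    have h2 := key x⁻¹ (fun s hs => by simpa using (h s hs).2) _ hg
    simpa [mul_assoc] using h2


/-- The image of the homomorphism `f̃ : G_{Γ₀} → G_{Γ̃}`, `v ↦ p_v`, is a
normal subgroup of `G_{Γ̃}`. -/
theorem ftilde_range_normal {V : Type u} [Finite V] (Γ : SimpleGraph V)
    (hconn : Γ.Connected) (hsil : ¬ HasSIL Γ)
    (G : V → Type uG) [∀ v, Group (G v)] [∀ v, Nontrivial (G v)]
    (gen : ∀ v, G v) (hgen : ∀ v, Subgroup.zpowers (gen v) = ⊤)
    (f : GraphProduct (Γ.induce (Delta Γ)ᶜ) (fun u : ↥(Delta Γ)ᶜ => G u.1) →*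
      TildeProduct Γ G)
    (hf : ∀ u : ↥(Delta Γ)ᶜ,
      f (of (Γ.induce (Delta Γ)ᶜ) (fun x : ↥(Delta Γ)ᶜ => G x.1) (v := u) (gen u.1)) =
        pvert Γ G gen u.1) :
    f.range.Normal := by
  classical
  let S : Set (TildeProduct Γ G) :=
    Set.range (fun u : ↥(Delta Γ)ᶜ => pvert Γ G gen u.1)
  have hrange : f.range = Subgroup.closure S := by
    apply le_antisymm
    · rw [MonoidHom.range_eq_map,
        ← closure_of_eq_top (Γ.induce (Delta Γ)ᶜ) (fun u : ↥(Delta Γ)ᶜ => G u.1),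
        MonoidHom.map_closure, Subgroup.closure_le]
      rintro _ ⟨y, ⟨u, g, rfl⟩, rfl⟩
      obtain ⟨n, rfl⟩ := Subgroup.mem_zpowers_iff.mp
        (show g ∈ Subgroup.zpowers (gen u.1) by rw [hgen u.1]; exact Subgroup.mem_top g)
      rw [map_zpow, map_zpow, hf u]
      have hm : pvert Γ G gen u.1 ∈ Subgroup.closure S := Subgroup.subset_closure ⟨u, rfl⟩
      exact Subgroup.zpow_mem _ hm n
    · rw [Subgroup.closure_le]
      rintro _ ⟨u, rfl⟩
      exact MonoidHom.mem_range.mpr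
        ⟨of (Γ.induce (Delta Γ)ᶜ) (fun x : ↥(Delta Γ)ᶜ => G x.1) (v := u) (gen u.1), hf u⟩
  rw [hrange, ← Subgroup.normalizer_eq_top_iff, eq_top_iff,
    ← closure_of_eq_top (tilde Γ) (fun p : TV Γ => G p.1.1), Subgroup.closure_le]
  rintro _ ⟨q, g, rfl⟩
  obtain ⟨n, rfl⟩ := Subgroup.mem_zpowers_iff.mp
    (show g ∈ Subgroup.zpowers (gen q.1.1) by rw [hgen q.1.1]; exact Subgroup.mem_top g)
  rw [map_zpow]
  refine Subgroup.zpow_mem _ ?_ n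
  apply mem_normalizer_of_conj
  rintro _ ⟨u, rfl⟩
  by_cases hc : u.1 ≠ q.1.1 ∧ ¬ Γ.Adj u.1 q.1.1 ∧ u.1 ∈ q.1.2
  · obtain ⟨hne, hnadj, hmem⟩ := hc
    have hw : q.1.1 ∈ (Delta Γ)ᶜ := by
      intro hdel
      have hadj : Γ.Adj q.1.1 u.1 := hdel u.1 hne
      have hst : u.1 ∈ (star Γ q.1.1)ᶜ := isCompOf_subset Γ q.2 hmem
      exact hst (Or.inr hadj)
    have hconj := pvert_conj_eq Γ G gen q.1.1 ⟨q.1.2, q.2⟩ (pvert Γ G gen u.1) (by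
      intro d hd
      refine commute_pvert Γ G gen u.1 _ fun c => ?_
      refine commute_gen_of Γ G gen _ _ ?_
      rintro ⟨-, -, -, hud⟩
      exact hd (Subtype.ext (isCompOf_eq_of_mem Γ d.2 q.2 hud hmem)))
    have hmem1 : pvert Γ G gen q.1.1 ∈ Subgroup.closure S :=
      Subgroup.subset_closure ⟨⟨q.1.1, hw⟩, rfl⟩
    have hmem2 : pvert Γ G gen u.1 ∈ Subgroup.closure S :=
      Subgroup.subset_closure ⟨u, rfl⟩
    have e1 : of (tilde Γ) (fun r : TV Γ => G r.1.1) (v := q) (gen q.1.1) *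
        pvert Γ G gen u.1 *
        (of (tilde Γ) (fun r : TV Γ => G r.1.1) (v := q) (gen q.1.1))⁻¹ =
        pvert Γ G gen q.1.1 * pvert Γ G gen u.1 * (pvert Γ G gen q.1.1)⁻¹ := hconj.1
    have e2 : (of (tilde Γ) (fun r : TV Γ => G r.1.1) (v := q) (gen q.1.1))⁻¹ *
        pvert Γ G gen u.1 *
        of (tilde Γ) (fun r : TV Γ => G r.1.1) (v := q) (gen q.1.1) =
        (pvert Γ G gen q.1.1)⁻¹ * pvert Γ G gen u.1 * pvert Γ G gen q.1.1 := hconj.2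
    constructor
    · rw [e1]
      exact Subgroup.mul_mem _ (Subgroup.mul_mem _ hmem1 hmem2) (Subgroup.inv_mem _ hmem1)
    · rw [e2]
      exact Subgroup.mul_mem _ (Subgroup.mul_mem _ (Subgroup.inv_mem _ hmem1) hmem2) hmem1
  · have hcom : Commute (of (tilde Γ) (fun r : TV Γ => G r.1.1) (v := q) (gen q.1.1))
        (pvert Γ G gen u.1) := by
      refine commute_pvert Γ G gen u.1 _ fun c => ?_
      refine commute_gen_of Γ G gen q _ ?_
      rintro ⟨h1, h2, h3, h4⟩
      exact hc ⟨h1.symm, fun ha => h2 ha.symm, h4⟩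
    constructor
    · rw [hcom.eq, mul_inv_cancel_right]
      exact Subgroup.subset_closure ⟨u, rfl⟩
    · rw [hcom.inv_left.eq, inv_mul_cancel_right]
      exact Subgroup.subset_closure ⟨u, rfl⟩


end ArXiv
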